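/- Equip ℝ³ with the Lorentzian form of signature (−,+,+). Let Ω ⊆ ℂ be open and connected, and let G, G̃ : Ω → ℍ² ⊂ ℝ³ be real-analytic harmonic maps (G_{z z̄} ∝ G and likewise for G̃) such that ⟨G_z,G_z⟩ = ⟨G̃_z,G̃_z⟩ and ⟨G_z,G_{z̄}⟩ = ⟨G̃_z,G̃_{z̄}⟩ hold on Ω. Suppose z₀ ∈ Ω is a point where G is an immersion (dG(z₀) has rank 2), and G(z₀) = G̃(z₀), G_z(z₀) = G̃_z(z₀). Then G = G̃ on Ω. -/

import Mathlib

/-- Wirtinger derivative ∂/∂z. -/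
noncomputable def wz (f : ℂ → ℂ) (z : ℂ) : ℂ :=
  (fderiv ℝ f z 1 - Complex.I * fderiv ℝ f z Complex.I) / 2

/-- Wirtinger derivative ∂/∂z̄. -/
noncomputable def wzb (f : ℂ → ℂ) (z : ℂ) : ℂ :=
  (fderiv ℝ f z 1 + Complex.I * fderiv ℝ f z Complex.I) / 2

/-- Componentwise Wirtinger derivative ∂/∂z for ℂ³-valued maps. -/
noncomputable def wzV (f : ℂ → Fin 3 → ℂ) (z : ℂ) : Fin 3 → ℂ :=
  fun i => wz (fun w => f w i) z

/-- Componentwise Wirtinger derivative ∂/∂z̄ for ℂ³-valued maps. -/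
noncomputable def wzbV (f : ℂ → Fin 3 → ℂ) (z : ℂ) : Fin 3 → ℂ :=
  fun i => wzb (fun w => f w i) z

/-- ℂ-bilinear extension of the Lorentzian form of signature (−,+,+). -/
def lor3c (x y : Fin 3 → ℂ) : ℂ := -(x 0 * y 0) + x 1 * y 1 + x 2 * y 2

/-- Complexification of a real map. -/
def cx (G : ℂ → (Fin 3 → ℝ)) : ℂ → Fin 3 → ℂ := fun w i => ((G w i : ℝ) : ℂ)


noncomputable section
open Complex Set Metric Filter Topology

namespace S16


def lorR (x y : Fin 3 → ℝ) : ℝ := -(x 0 * y 0) + x 1 * y 1 + x 2 * y 2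

lemma lorR_comm (x y : Fin 3 → ℝ) : lorR x y = lorR y x := by simp [lorR]; ring

variable {E' : Type*} [NormedAddCommGroup E'] [NormedSpace ℝ E'] [CompleteSpace E']

lemma analyticOnNhd_fderiv_apply {f : ℂ → E'} {Ω : Set ℂ} (hΩ : IsOpen Ω)
    (h : AnalyticOnNhd ℝ f Ω) (v : ℂ) :
    AnalyticOnNhd ℝ (fun w => fderiv ℝ f w v) Ω := fun z hz =>
  ((ContinuousLinearMap.apply ℝ E' v).analyticAt _).comp ((h z hz).fderiv)

lemma fderiv_comp_proj {f : ℂ → Fin 3 → ℝ} {z v : ℂ} (hf : DifferentiableAt ℝ f z) (i : Fin 3) :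
    fderiv ℝ (fun w => f w i) z v = fderiv ℝ f z v i := by
  have h := ((ContinuousLinearMap.proj (R := ℝ) (φ := fun _ : Fin 3 => ℝ) i).hasFDerivAt
      (x := f z)).comp z hf.hasFDerivAt
  have := h.fderiv
  calc fderiv ℝ (fun w => f w i) z v
      = fderiv ℝ ((ContinuousLinearMap.proj (R := ℝ) (φ := fun _ : Fin 3 => ℝ) i) ∘ f) z v := rfl
    _ = fderiv ℝ f z v i := by rw [this]; rfl

lemma diff_proj {f : ℂ → Fin 3 → ℝ} {z : ℂ} (hf : DifferentiableAt ℝ f z) (i : Fin 3) :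
    DifferentiableAt ℝ (fun w => f w i) z :=
  (ContinuousLinearMap.proj (R := ℝ) (φ := fun _ : Fin 3 => ℝ) i).differentiableAt.comp z hf

lemma fderiv_lorR {f g : ℂ → Fin 3 → ℝ} {z : ℂ} (v : ℂ)
    (hf : DifferentiableAt ℝ f z) (hg : DifferentiableAt ℝ g z) :
    fderiv ℝ (fun w => lorR (f w) (g w)) z v
      = lorR (fderiv ℝ f z v) (g z) + lorR (f z) (fderiv ℝ g z v) := by
  have hfi := fun i => (diff_proj hf i).hasFDerivAt
  have hgi := fun i => (diff_proj hg i).hasFDerivAt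
  have H := ((((hfi 0).mul (hgi 0)).neg.add ((hfi 1).mul (hgi 1))).add
      ((hfi 2).mul (hgi 2)))
  have hEq : (fun w => lorR (f w) (g w))
      = fun w => -((fun w => f w 0) w * (fun w => g w 0) w)
        + (fun w => f w 1) w * (fun w => g w 1) w
        + (fun w => f w 2) w * (fun w => g w 2) w := by
    funext w; simp [lorR]
  have H' : HasFDerivAt (fun w => -((fun w => f w 0) w * (fun w => g w 0) w)
    + (fun w => f w 1) w * (fun w => g w 1) w + (fun w => f w 2) w * (fun w => g w 2) w) _ z := H
  rw [hEq, H'.fderiv]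
  simp only [ContinuousLinearMap.add_apply, ContinuousLinearMap.coe_smul',
    ContinuousLinearMap.neg_apply, Pi.smul_apply, smul_eq_mul]
  rw [fderiv_comp_proj hf 0, fderiv_comp_proj hf 1, fderiv_comp_proj hf 2,
    fderiv_comp_proj hg 0, fderiv_comp_proj hg 1, fderiv_comp_proj hg 2]
  simp [lorR]; ring

lemma fderiv_congr_on {Ω : Set ℂ} (hΩ : IsOpen Ω) {φ ψ : ℂ → E'}
    (h : ∀ w ∈ Ω, φ w = ψ w) {z : ℂ} (hz : z ∈ Ω) :
    fderiv ℝ φ z = fderiv ℝ ψ z :=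
  Filter.EventuallyEq.fderiv_eq (Set.EqOn.eventuallyEq_of_mem (fun w hw => h w hw) (hΩ.mem_nhds hz))

lemma Dv_comm {f : ℂ → E'} {z : ℂ} (hf : ContDiffAt ℝ 2 f z) :
    fderiv ℝ (fun w => fderiv ℝ f w Complex.I) z 1
      = fderiv ℝ (fun w => fderiv ℝ f w 1) z Complex.I := by
  have hd : DifferentiableAt ℝ (fderiv ℝ f) z :=
    (hf.fderiv_right (m := 1) (by norm_num)).differentiableAt (by norm_num)
  have h1 : ∀ v u : ℂ, fderiv ℝ (fun w => fderiv ℝ f w v) z u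
      = fderiv ℝ (fderiv ℝ f) z u v := by
    intro v u
    rw [fderiv_clm_apply hd (differentiableAt_const v)]
    simp
  rw [h1, h1, hf.isSymmSndFDerivAt (by simp)]

lemma lorR_smul_sub (a b : ℝ) (x y h : Fin 3 → ℝ) :
    lorR (a • x - b • y) h = a * lorR x h - b * lorR y h := by
  simp [lorR]; ring

/-- If `x` is lor-orthogonal to a triple with nondegenerate Gram matrix, then `x = 0`. -/
lemma lor_vanish {x u v w : Fin 3 → ℝ} {e f g2 : ℝ}
    (huu : lorR u u = -1) (huv : lorR u v = 0) (huw : lorR u w = 0)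
    (hvv : lorR v v = e) (hvw : lorR v w = f) (hww : lorR w w = g2)
    (hd : e * g2 - f ^ 2 ≠ 0)
    (h1 : lorR x u = 0) (h2 : lorR x v = 0) (h3 : lorR x w = 0) : x = 0 := by
  classical
  simp only [lorR] at huu huv huw hvv hvw hww h1 h2 h3
  set M : Matrix (Fin 3) (Fin 3) ℝ :=
    !![-u 0, u 1, u 2; -v 0, v 1, v 2; -w 0, w 1, w 2] with hM
  set Bt : Matrix (Fin 3) (Fin 3) ℝ :=
    !![u 0, v 0, w 0; u 1, v 1, w 1; u 2, v 2, w 2] with hBt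
  have hGram : M * Bt = !![-1, 0, 0; 0, e, f; 0, f, g2] := by
    ext i j
    fin_cases i <;> fin_cases j <;>
      · simp [hM, hBt, Matrix.mul_apply, Fin.sum_univ_three, Matrix.vecHead, Matrix.vecTail]
        linarith
  have hdetM : M.det ≠ 0 := by
    intro h
    have h0 : (M * Bt).det = 0 := by rw [Matrix.det_mul, h, zero_mul]
    rw [hGram, Matrix.det_fin_three] at h0
    simp at h0
    apply hd; linarith
  have hMx : M.mulVec x = 0 := by
    funext i
    fin_cases i <;>
      · simp [hM, Matrix.mulVec, dotProduct, Fin.sum_univ_three]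
        linarith
  have hx : x = (M⁻¹ * M).mulVec x := by
    rw [Matrix.nonsing_inv_mul M (isUnit_iff_ne_zero.mpr hdetM), Matrix.one_mulVec]
  rw [hx, ← Matrix.mulVec_mulVec, hMx, Matrix.mulVec_zero]

/-- Positivity of the Lorentz form on the tangent space of the hyperboloid. -/
lemma lor_pos {H v : Fin 3 → ℝ} (hH : lorR H H = -1) (hv : lorR v H = 0) (hne : v ≠ 0) :
    0 < lorR v v := by
  simp only [lorR] at hH hv ⊢
  have hh : H 0 ^ 2 = 1 + H 1 ^ 2 + H 2 ^ 2 := by nlinarith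
  have hH0 : H 0 ≠ 0 := by
    intro h; rw [h] at hh; nlinarith [sq_nonneg (H 1), sq_nonneg (H 2)]
  have hs : v 0 * H 0 = v 1 * H 1 + v 2 * H 2 := by linarith
  have key : (-(v 0 * v 0) + v 1 * v 1 + v 2 * v 2) * H 0 ^ 2
      = v 1 ^ 2 + v 2 ^ 2 + (v 1 * H 2 - v 2 * H 1) ^ 2 := by
    have h2 : (v 0 * H 0) ^ 2 = (v 1 * H 1 + v 2 * H 2) ^ 2 := by rw [hs]
    nlinarith [h2, hh]
  by_contra hle
  push_neg at hle
  have hH0sq : 0 < H 0 ^ 2 := by positivity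
  have h1 : v 1 = 0 := by
    nlinarith [sq_nonneg (v 1 * H 2 - v 2 * H 1), sq_nonneg (v 2), sq_nonneg (v 1)]
  have h2 : v 2 = 0 := by
    nlinarith [sq_nonneg (v 1 * H 2 - v 2 * H 1), sq_nonneg (v 1), sq_nonneg (v 2)]
  have h00 : v 0 * H 0 = 0 := by rw [hs, h1, h2]; ring
  rcases mul_eq_zero.mp h00 with h0 | h0
  · exact hne (by funext i; fin_cases i <;> simp [h0, h1, h2])
  · exact hH0 h0

/-- Immersion gives positive Gram determinant. -/
lemma gram_pos {H Gx Gy : Fin 3 → ℝ} (hH : lorR H H = -1)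
    (hx : lorR Gx H = 0) (hy : lorR Gy H = 0)
    (hind : ∀ a b : ℝ, a • Gx + b • Gy = 0 → a = 0 ∧ b = 0) :
    0 < lorR Gx Gx * lorR Gy Gy - lorR Gx Gy ^ 2 := by
  have hGx0 : Gx ≠ 0 := by
    intro h
    have := hind 1 0 (by simp [h])
    exact one_ne_zero this.1
  have hE : 0 < lorR Gx Gx := lor_pos hH hx hGx0
  set w : Fin 3 → ℝ := lorR Gx Gx • Gy - lorR Gx Gy • Gx with hw
  have hw0 : w ≠ 0 := by
    intro h
    have h2 := hind (-(lorR Gx Gy)) (lorR Gx Gx) ?_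
    · exact (ne_of_gt hE) h2.2
    · rw [← h, hw]; funext i; simp; ring
  have hwH : lorR w H = 0 := by
    rw [hw, lorR_smul_sub, hx, hy]; ring
  have hpos := lor_pos hH hwH hw0
  have hcomp : lorR w w
      = lorR Gx Gx * (lorR Gx Gx * lorR Gy Gy - lorR Gx Gy ^ 2) := by
    simp only [hw, lorR, Pi.sub_apply, Pi.smul_apply, smul_eq_mul]
    ring
  rw [hcomp] at hpos
  nlinarith [hpos, hE]
def Dx (H : ℂ → Fin 3 → ℝ) : ℂ → Fin 3 → ℝ := fun z => fderiv ℝ H z 1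
def Dy (H : ℂ → Fin 3 → ℝ) : ℂ → Fin 3 → ℝ := fun z => fderiv ℝ H z Complex.I
def eF (H : ℂ → Fin 3 → ℝ) : ℂ → ℝ := fun z => lorR (Dx H z) (Dx H z)
def fF (H : ℂ → Fin 3 → ℝ) : ℂ → ℝ := fun z => lorR (Dx H z) (Dy H z)
def g2F (H : ℂ → Fin 3 → ℝ) : ℂ → ℝ := fun z => lorR (Dy H z) (Dy H z)
def dF (H : ℂ → Fin 3 → ℝ) : ℂ → ℝ := fun z => eF H z * g2F H z - fF H z ^ 2
def p1 (H : ℂ → Fin 3 → ℝ) : ℂ → ℝ := fun z => fderiv ℝ (eF H) z 1 / 2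
def q1 (H : ℂ → Fin 3 → ℝ) : ℂ → ℝ := fun z =>
  fderiv ℝ (fF H) z 1 - fderiv ℝ (eF H) z Complex.I / 2
def p2 (H : ℂ → Fin 3 → ℝ) : ℂ → ℝ := fun z => fderiv ℝ (eF H) z Complex.I / 2
def q2 (H : ℂ → Fin 3 → ℝ) : ℂ → ℝ := fun z => fderiv ℝ (g2F H) z 1 / 2
def p3 (H : ℂ → Fin 3 → ℝ) : ℂ → ℝ := fun z =>
  fderiv ℝ (fF H) z Complex.I - fderiv ℝ (g2F H) z 1 / 2
def q3 (H : ℂ → Fin 3 → ℝ) : ℂ → ℝ := fun z => fderiv ℝ (g2F H) z Complex.I / 2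
def bco (H : ℂ → Fin 3 → ℝ) (p q : ℂ → ℝ) : ℂ → ℝ := fun z =>
  (g2F H z * p z - fF H z * q z) / dF H z
def cco (H : ℂ → Fin 3 → ℝ) (p q : ℂ → ℝ) : ℂ → ℝ := fun z =>
  (eF H z * q z - fF H z * p z) / dF H z

lemma lorR_expand (a b c : ℝ) (X x y w h : Fin 3 → ℝ) :
    lorR (X - (a • x + b • y + c • w)) h
      = lorR X h - a * lorR x h - b * lorR y h - c * lorR w h := by
  simp [lorR]; ring

theorem decomp {Ω : Set ℂ} (hΩ : IsOpen Ω) {H : ℂ → Fin 3 → ℝ}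
    (hH : AnalyticOnNhd ℝ H Ω) (hnorm : ∀ w ∈ Ω, lorR (H w) (H w) = -1)
    {z : ℂ} (hz : z ∈ Ω) (hd : dF H z ≠ 0) :
    Dx (Dx H) z = eF H z • H z + bco H (p1 H) (q1 H) z • Dx H z + cco H (p1 H) (q1 H) z • Dy H z
    ∧ Dy (Dx H) z = fF H z • H z + bco H (p2 H) (q2 H) z • Dx H z + cco H (p2 H) (q2 H) z • Dy H z
    ∧ Dy (Dy H) z
        = g2F H z • H z + bco H (p3 H) (q3 H) z • Dx H z + cco H (p3 H) (q3 H) z • Dy H z := by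
  -- differentiability
  have hDx : AnalyticOnNhd ℝ (Dx H) Ω := analyticOnNhd_fderiv_apply hΩ hH 1
  have hDy : AnalyticOnNhd ℝ (Dy H) Ω := analyticOnNhd_fderiv_apply hΩ hH Complex.I
  have dH : ∀ w ∈ Ω, DifferentiableAt ℝ H w := fun w hw => (hH w hw).differentiableAt
  have dDx : ∀ w ∈ Ω, DifferentiableAt ℝ (Dx H) w := fun w hw => (hDx w hw).differentiableAt
  have dDy : ∀ w ∈ Ω, DifferentiableAt ℝ (Dy H) w := fun w hw => (hDy w hw).differentiableAt
  -- first-order identity : tangency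
  have I1 : ∀ w ∈ Ω, ∀ v : ℂ, lorR (fderiv ℝ H w v) (H w) = 0 := by
    intro w hw v
    have h0 : fderiv ℝ (fun w => lorR (H w) (H w)) w
        = fderiv ℝ (fun _ : ℂ => (-1 : ℝ)) w := fderiv_congr_on hΩ hnorm hw
    have h1 := fderiv_lorR (f := H) (g := H) v (dH w hw) (dH w hw)
    rw [h0] at h1
    simp only [fderiv_const_apply, fderiv_const, Pi.zero_apply, ContinuousLinearMap.zero_apply] at h1
    rw [lorR_comm (H w)] at h1
    linarith
  -- second-order identities against H
  have I2 : ∀ (f : ℂ → Fin 3 → ℝ), AnalyticOnNhd ℝ f Ω →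
      (∀ w ∈ Ω, lorR (f w) (H w) = 0) →
      ∀ v : ℂ, lorR (fderiv ℝ f z v) (H z) = - lorR (f z) (fderiv ℝ H z v) := by
    intro f hf hff v
    have h0 : fderiv ℝ (fun w => lorR (f w) (H w)) z
        = fderiv ℝ (fun _ : ℂ => (0 : ℝ)) z := fderiv_congr_on hΩ hff hz
    have h1 := fderiv_lorR (f := f) (g := H) v (hf z hz).differentiableAt (dH z hz)
    rw [h0] at h1
    simp only [fderiv_const_apply, fderiv_const, Pi.zero_apply, ContinuousLinearMap.zero_apply] at h1
    linarith
  have IDx : ∀ w ∈ Ω, lorR (Dx H w) (H w) = 0 := fun w hw => I1 w hw 1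
  have IDy : ∀ w ∈ Ω, lorR (Dy H w) (H w) = 0 := fun w hw => I1 w hw Complex.I
  -- symmetry of mixed derivative
  have hsymm : Dx (Dy H) z = Dy (Dx H) z := Dv_comm ((hH z hz).contDiffAt)
  -- scalar products of second derivatives against H
  have J1 : lorR (Dx (Dx H) z) (H z) = - eF H z := by
    have := I2 (Dx H) hDx IDx 1
    rw [lorR_comm (Dx H z)] at this
    exact this.trans (by rw [lorR_comm]; rfl)
  have J2 : lorR (Dy (Dx H) z) (H z) = - fF H z := by
    have := I2 (Dx H) hDx IDx Complex.I
    exact this.trans (by rw [show fderiv ℝ H z Complex.I = Dy H z from rfl]; rfl)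
  have J3 : lorR (Dy (Dy H) z) (H z) = - g2F H z := by
    have := I2 (Dy H) hDy IDy Complex.I
    exact this.trans (by rw [show fderiv ℝ H z Complex.I = Dy H z from rfl]; rfl)
  -- derivatives of the fundamental form coefficients
  have KE : ∀ v : ℂ, fderiv ℝ (eF H) z v = 2 * lorR (fderiv ℝ (Dx H) z v) (Dx H z) := by
    intro v
    have := fderiv_lorR (f := Dx H) (g := Dx H) v (dDx z hz) (dDx z hz)
    rw [lorR_comm (Dx H z) (fderiv ℝ (Dx H) z v)] at this
    calc fderiv ℝ (eF H) z v
        = fderiv ℝ (fun w => lorR (Dx H w) (Dx H w)) z v := rfl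
      _ = 2 * lorR (fderiv ℝ (Dx H) z v) (Dx H z) := by rw [this]; ring
  have KF : ∀ v : ℂ, fderiv ℝ (fF H) z v
      = lorR (fderiv ℝ (Dx H) z v) (Dy H z) + lorR (Dx H z) (fderiv ℝ (Dy H) z v) := by
    intro v
    exact fderiv_lorR (f := Dx H) (g := Dy H) v (dDx z hz) (dDy z hz)
  have KG : ∀ v : ℂ, fderiv ℝ (g2F H) z v = 2 * lorR (fderiv ℝ (Dy H) z v) (Dy H z) := by
    intro v
    have := fderiv_lorR (f := Dy H) (g := Dy H) v (dDy z hz) (dDy z hz)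
    rw [lorR_comm (Dy H z) (fderiv ℝ (Dy H) z v)] at this
    calc fderiv ℝ (g2F H) z v
        = fderiv ℝ (fun w => lorR (Dy H w) (Dy H w)) z v := rfl
      _ = 2 * lorR (fderiv ℝ (Dy H) z v) (Dy H z) := by rw [this]; ring
  -- the nine products
  have P11 : lorR (Dx (Dx H) z) (Dx H z) = p1 H z := by
    have := KE 1; simp only [p1]; rw [this]; ring_nf; rfl
  have P21 : lorR (Dy (Dx H) z) (Dx H z) = p2 H z := by
    have := KE Complex.I; simp only [p2]; rw [this]; ring_nf; rfl
  have P22 : lorR (Dy (Dx H) z) (Dy H z) = q2 H z := by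
    have := KG 1
    rw [show fderiv ℝ (Dy H) z 1 = Dx (Dy H) z from rfl, hsymm] at this
    simp only [q2]; rw [this]; ring
  have P12 : lorR (Dx (Dx H) z) (Dy H z) = q1 H z := by
    have h := KF 1
    rw [show fderiv ℝ (Dy H) z 1 = Dx (Dy H) z from rfl, hsymm] at h
    rw [lorR_comm (Dx H z) (Dy (Dx H) z), P21] at h
    simp only [q1, p2] at *
    rw [show fderiv ℝ (Dx H) z 1 = Dx (Dx H) z from rfl] at h
    linarith
  have P31 : lorR (Dy (Dy H) z) (Dx H z) = p3 H z := by
    have h := KF Complex.I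
    rw [show fderiv ℝ (Dx H) z Complex.I = Dy (Dx H) z from rfl,
      show fderiv ℝ (Dy H) z Complex.I = Dy (Dy H) z from rfl] at h
    rw [P22, lorR_comm (Dx H z) (Dy (Dy H) z)] at h
    simp only [p3, q2] at *
    linarith
  have P32 : lorR (Dy (Dy H) z) (Dy H z) = q3 H z := by
    have := KG Complex.I
    rw [show fderiv ℝ (Dy H) z Complex.I = Dy (Dy H) z from rfl] at this
    simp only [q3]; rw [this]; ring
  -- generic resolution step
  have solve : ∀ (X : Fin 3 → ℝ) (m p q : ℝ),
      lorR X (H z) = - m → lorR X (Dx H z) = p → lorR X (Dy H z) = q →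
      X = m • H z + bco H (fun _ => p) (fun _ => q) z • Dx H z
            + cco H (fun _ => p) (fun _ => q) z • Dy H z := by
    intro X m p q hXH hXx hXy
    have hb : bco H (fun _ => p) (fun _ => q) z * eF H z
        + cco H (fun _ => p) (fun _ => q) z * fF H z = p := by
      simp only [bco, cco, dF] at *
      rw [div_mul_eq_mul_div, div_mul_eq_mul_div, ← add_div, div_eq_iff hd]
      ring
    have hc : bco H (fun _ => p) (fun _ => q) z * fF H z
        + cco H (fun _ => p) (fun _ => q) z * g2F H z = q := by
      simp only [bco, cco, dF] at *
      rw [div_mul_eq_mul_div, div_mul_eq_mul_div, ← add_div, div_eq_iff hd]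
      ring
    have h0 := lor_vanish (x := X - (m • H z + bco H (fun _ => p) (fun _ => q) z • Dx H z
          + cco H (fun _ => p) (fun _ => q) z • Dy H z))
      (hnorm z hz) (by rw [lorR_comm]; exact IDx z hz) (by rw [lorR_comm]; exact IDy z hz)
      (rfl) (rfl) (rfl) hd ?_ ?_ ?_
    · have := sub_eq_zero.mp h0
      exact this
    · rw [lorR_expand, hXH, hnorm z hz, IDx z hz, IDy z hz]
      ring
    · rw [lorR_expand, hXx, lorR_comm (H z), IDx z hz]
      rw [show lorR (Dx H z) (Dx H z) = eF H z from rfl,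
        show lorR (Dy H z) (Dx H z) = lorR (Dx H z) (Dy H z) from lorR_comm _ _,
        show lorR (Dx H z) (Dy H z) = fF H z from rfl]
      linarith [hb]
    · rw [lorR_expand, hXy, lorR_comm (H z), IDy z hz]
      rw [show lorR (Dx H z) (Dy H z) = fF H z from rfl,
        show lorR (Dy H z) (Dy H z) = g2F H z from rfl]
      linarith [hc]
  -- conclude; note bco H (fun _ => p1 H z) ... z = bco H (p1 H) (q1 H) z definitionally
  refine ⟨?_, ?_, ?_⟩
  · have := solve (Dx (Dx H) z) (eF H z) (p1 H z) (q1 H z)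
      (by rw [J1]) (by rw [P11]) (by rw [P12])
    simpa [bco, cco] using this
  · have := solve (Dy (Dx H) z) (fF H z) (p2 H z) (q2 H z)
      (by rw [J2]) (by rw [P21]) (by rw [P22])
    simpa [bco, cco] using this
  · have := solve (Dy (Dy H) z) (g2F H z) (p3 H z) (q3 H z)
      (by rw [J3]) (by rw [P31]) (by rw [P32])
    simpa [bco, cco] using this
lemma cx_fderiv {H : ℂ → Fin 3 → ℝ} {z : ℂ} (hd : DifferentiableAt ℝ H z) (v : ℂ) (i : Fin 3) :
    fderiv ℝ (fun w => ((H w i : ℝ) : ℂ)) z v = ((fderiv ℝ H z v i : ℝ) : ℂ) := by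
  have h1 : fderiv ℝ (fun w => ((H w i : ℝ) : ℂ)) z
      = Complex.ofRealCLM.comp (fderiv ℝ (fun w => H w i) z) :=
    (Complex.ofRealCLM.hasFDerivAt.comp z (diff_proj hd i).hasFDerivAt).fderiv
  rw [h1]
  simp [fderiv_comp_proj hd i]

lemma wzV_eq {H : ℂ → Fin 3 → ℝ} {z : ℂ} (hd : DifferentiableAt ℝ H z) :
    wzV (cx H) z = fun i =>
      (((fderiv ℝ H z 1 i : ℝ) : ℂ) - Complex.I * ((fderiv ℝ H z Complex.I i : ℝ) : ℂ)) / 2 := by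
  funext i
  simp only [wzV, wz, cx, cx_fderiv hd]

lemma wzbV_eq {H : ℂ → Fin 3 → ℝ} {z : ℂ} (hd : DifferentiableAt ℝ H z) :
    wzbV (cx H) z = fun i =>
      (((fderiv ℝ H z 1 i : ℝ) : ℂ) + Complex.I * ((fderiv ℝ H z Complex.I i : ℝ) : ℂ)) / 2 := by
  funext i
  simp only [wzbV, wzb, cx, cx_fderiv hd]

lemma lor3c_cx (H : ℂ → Fin 3 → ℝ) (z : ℂ) :
    lor3c (cx H z) (cx H z) = ((lorR (H z) (H z) : ℝ) : ℂ) := by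
  simp only [lor3c, cx, lorR]
  push_cast
  ring

lemma lor3c_zz {H : ℂ → Fin 3 → ℝ} {z : ℂ} (hd : DifferentiableAt ℝ H z) :
    lor3c (wzV (cx H) z) (wzV (cx H) z)
      = (((lorR (fderiv ℝ H z 1) (fderiv ℝ H z 1)
            - lorR (fderiv ℝ H z Complex.I) (fderiv ℝ H z Complex.I)) / 4 : ℝ) : ℂ)
        - Complex.I * ((lorR (fderiv ℝ H z 1) (fderiv ℝ H z Complex.I) / 2 : ℝ) : ℂ) := by
  rw [wzV_eq hd]
  simp only [lor3c, lorR]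
  push_cast
  ring_nf
  simp [Complex.ext_iff]
  constructor <;> ring

lemma lor3c_zzb {H : ℂ → Fin 3 → ℝ} {z : ℂ} (hd : DifferentiableAt ℝ H z) :
    lor3c (wzV (cx H) z) (wzbV (cx H) z)
      = (((lorR (fderiv ℝ H z 1) (fderiv ℝ H z 1)
            + lorR (fderiv ℝ H z Complex.I) (fderiv ℝ H z Complex.I)) / 4 : ℝ) : ℂ) := by
  rw [wzV_eq hd, wzbV_eq hd]
  simp only [lor3c, lorR]
  push_cast
  ring_nf
  simp [Complex.ext_iff]
  constructor <;> ring

lemma tangent {Ω : Set ℂ} (hΩ : IsOpen Ω) {H : ℂ → Fin 3 → ℝ} (hH : AnalyticOnNhd ℝ H Ω)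
    (hnorm : ∀ w ∈ Ω, lorR (H w) (H w) = -1) {z : ℂ} (hz : z ∈ Ω) (v : ℂ) :
    lorR (fderiv ℝ H z v) (H z) = 0 := by
  have h0 : fderiv ℝ (fun w => lorR (H w) (H w)) z
      = fderiv ℝ (fun _ : ℂ => (-1 : ℝ)) z := fderiv_congr_on hΩ hnorm hz
  have h1 := fderiv_lorR (f := H) (g := H) v (hH z hz).differentiableAt (hH z hz).differentiableAt
  rw [h0] at h1
  simp only [fderiv_const_apply, fderiv_const, Pi.zero_apply, ContinuousLinearMap.zero_apply] at h1
  rw [lorR_comm (H z)] at h1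
  linarith

lemma lorR_analyticOnNhd {f g : ℂ → Fin 3 → ℝ} {Ω : Set ℂ}
    (hf : AnalyticOnNhd ℝ f Ω) (hg : AnalyticOnNhd ℝ g Ω) :
    AnalyticOnNhd ℝ (fun z => lorR (f z) (g z)) Ω := by
  intro z hz
  have hfi : ∀ i : Fin 3, AnalyticAt ℝ (fun w => f w i) z := fun i =>
    ((ContinuousLinearMap.proj (R := ℝ) (φ := fun _ : Fin 3 => ℝ) i).analyticAt _).comp (hf z hz)
  have hgi : ∀ i : Fin 3, AnalyticAt ℝ (fun w => g w i) z := fun i =>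
    ((ContinuousLinearMap.proj (R := ℝ) (φ := fun _ : Fin 3 => ℝ) i).analyticAt _).comp (hg z hz)
  exact (((hfi 0).mul (hgi 0)).neg.add ((hfi 1).mul (hgi 1))).add ((hfi 2).mul (hgi 2))
abbrev W := (Fin 3 → ℝ) × ((Fin 3 → ℝ) × (Fin 3 → ℝ))
def π₀ : W →L[ℝ] (Fin 3 → ℝ) := ContinuousLinearMap.fst ℝ _ _
def πs : W →L[ℝ] ((Fin 3 → ℝ) × (Fin 3 → ℝ)) := ContinuousLinearMap.snd ℝ _ _
def π₁ : W →L[ℝ] (Fin 3 → ℝ) := (ContinuousLinearMap.fst ℝ _ _).comp πs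
def π₂ : W →L[ℝ] (Fin 3 → ℝ) := (ContinuousLinearMap.snd ℝ _ _).comp πs
def Cs1 (T : W →L[ℝ] (Fin 3 → ℝ)) : W →L[ℝ] W := T.prod ((0 : W →L[ℝ] _).prod 0)
def Cs2 (T : W →L[ℝ] (Fin 3 → ℝ)) : W →L[ℝ] W := (0 : W →L[ℝ] _).prod (T.prod 0)
def Cs3 (T : W →L[ℝ] (Fin 3 → ℝ)) : W →L[ℝ] W :=
  (0 : W →L[ℝ] _).prod (((0 : W →L[ℝ] _)).prod T)
def VH (H : ℂ → Fin 3 → ℝ) : ℂ → W := fun w => (H w, (Dx H w, Dy H w))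

lemma local_eq {Ω : Set ℂ} (hΩ : IsOpen Ω) {G Gt : ℂ → Fin 3 → ℝ}
    (hG : AnalyticOnNhd ℝ G Ω) (hGt : AnalyticOnNhd ℝ Gt Ω)
    (hnG : ∀ w ∈ Ω, lorR (G w) (G w) = -1) (hnGt : ∀ w ∈ Ω, lorR (Gt w) (Gt w) = -1)
    (hE : ∀ w ∈ Ω, eF G w = eF Gt w) (hF : ∀ w ∈ Ω, fF G w = fF Gt w)
    (hG2 : ∀ w ∈ Ω, g2F G w = g2F Gt w)
    {z₀ : ℂ} (hz₀ : z₀ ∈ Ω) (hd0 : dF G z₀ ≠ 0)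
    (h0 : G z₀ = Gt z₀) (hx0 : Dx G z₀ = Dx Gt z₀) (hy0 : Dy G z₀ = Dy Gt z₀) :
    G =ᶠ[𝓝 z₀] Gt := by
  classical
  -- analyticity of derived quantities
  have hDxG : AnalyticOnNhd ℝ (Dx G) Ω := analyticOnNhd_fderiv_apply hΩ hG 1
  have hDyG : AnalyticOnNhd ℝ (Dy G) Ω := analyticOnNhd_fderiv_apply hΩ hG Complex.I
  have hDxGt : AnalyticOnNhd ℝ (Dx Gt) Ω := analyticOnNhd_fderiv_apply hΩ hGt 1
  have hDyGt : AnalyticOnNhd ℝ (Dy Gt) Ω := analyticOnNhd_fderiv_apply hΩ hGt Complex.I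
  have heA : AnalyticOnNhd ℝ (eF G) Ω := lorR_analyticOnNhd hDxG hDxG
  have hfA : AnalyticOnNhd ℝ (fF G) Ω := lorR_analyticOnNhd hDxG hDyG
  have hgA : AnalyticOnNhd ℝ (g2F G) Ω := lorR_analyticOnNhd hDyG hDyG
  have hdA : AnalyticOnNhd ℝ (dF G) Ω := fun z hz =>
    ((heA z hz).mul (hgA z hz)).sub ((hfA z hz).pow 2)
  -- shared coefficients
  have hEs : ∀ w ∈ Ω, eF Gt w = eF G w := fun w hw => (hE w hw).symm
  have hFs : ∀ w ∈ Ω, fF Gt w = fF G w := fun w hw => (hF w hw).symm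
  have hGs : ∀ w ∈ Ω, g2F Gt w = g2F G w := fun w hw => (hG2 w hw).symm
  have hfe : ∀ z ∈ Ω, fderiv ℝ (eF Gt) z = fderiv ℝ (eF G) z :=
    fun z hz => fderiv_congr_on hΩ hEs hz
  have hff : ∀ z ∈ Ω, fderiv ℝ (fF Gt) z = fderiv ℝ (fF G) z :=
    fun z hz => fderiv_congr_on hΩ hFs hz
  have hfg : ∀ z ∈ Ω, fderiv ℝ (g2F Gt) z = fderiv ℝ (g2F G) z :=
    fun z hz => fderiv_congr_on hΩ hGs hz
  have hdFs : ∀ w ∈ Ω, dF Gt w = dF G w := fun w hw => by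
    simp only [dF, hEs w hw, hFs w hw, hGs w hw]
  have hp1 : ∀ z ∈ Ω, p1 Gt z = p1 G z := fun z hz => by simp only [p1, hfe z hz]
  have hq1 : ∀ z ∈ Ω, q1 Gt z = q1 G z := fun z hz => by simp only [q1, hfe z hz, hff z hz]
  have hp2 : ∀ z ∈ Ω, p2 Gt z = p2 G z := fun z hz => by simp only [p2, hfe z hz]
  have hq2 : ∀ z ∈ Ω, q2 Gt z = q2 G z := fun z hz => by simp only [q2, hfg z hz]
  have hp3 : ∀ z ∈ Ω, p3 Gt z = p3 G z := fun z hz => by simp only [p3, hff z hz, hfg z hz]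
  have hq3 : ∀ z ∈ Ω, q3 Gt z = q3 G z := fun z hz => by simp only [q3, hfg z hz]
  have hbc : ∀ (p q pt qt : ℂ → ℝ), ∀ z ∈ Ω, pt z = p z → qt z = q z →
      bco Gt pt qt z = bco G p q z ∧ cco Gt pt qt z = cco G p q z := by
    intro p q pt qt z hz hp hq
    constructor
    · simp only [bco, hGs z hz, hFs z hz, hdFs z hz, hp, hq]
    · simp only [cco, hEs z hz, hFs z hz, hdFs z hz, hp, hq]
  -- choose a good ball
  obtain ⟨ε, hεpos, hball⟩ : ∃ ε > 0, ball z₀ ε ⊆ Ω ∩ {z | dF G z ≠ 0} := by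
    have h1 : Ω ∩ {z | dF G z ≠ 0} ∈ 𝓝 z₀ := by
      have hc : ContinuousAt (dF G) z₀ := (hdA z₀ hz₀).continuousAt
      have h2 : {z | dF G z ≠ 0} ∈ 𝓝 z₀ := hc.eventually_ne hd0
      exact Filter.inter_mem (hΩ.mem_nhds hz₀) h2
    rcases Metric.mem_nhds_iff.mp h1 with ⟨ε, hε, hsub⟩
    exact ⟨ε, hε, hsub⟩
  set ρ : ℝ := ε / 3 with hρ
  have hρpos : 0 < ρ := by positivity
  have hcb : closedBall z₀ (2 * ρ) ⊆ ball z₀ ε := closedBall_subset_ball (by rw [hρ]; linarith)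
  have hballΩ : ∀ z ∈ closedBall z₀ (2 * ρ), z ∈ Ω := fun z hz => (hball (hcb hz)).1
  have hballd : ∀ z ∈ closedBall z₀ (2 * ρ), dF G z ≠ 0 := fun z hz => (hball (hcb hz)).2
  -- the coefficient functions
  set b1 : ℂ → ℝ := bco G (p1 G) (q1 G) with hb1d
  set c1 : ℂ → ℝ := cco G (p1 G) (q1 G) with hc1d
  set b2 : ℂ → ℝ := bco G (p2 G) (q2 G) with hb2d
  set c2 : ℂ → ℝ := cco G (p2 G) (q2 G) with hc2d
  set b3 : ℂ → ℝ := bco G (p3 G) (q3 G) with hb3d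
  set c3 : ℂ → ℝ := cco G (p3 G) (q3 G) with hc3d
  -- the connection fields
  set Ax : ℂ → W →L[ℝ] W := fun z => Cs1 π₁ + eF G z • Cs2 π₀ + b1 z • Cs2 π₁ + c1 z • Cs2 π₂
      + fF G z • Cs3 π₀ + b2 z • Cs3 π₁ + c2 z • Cs3 π₂ with hAxd
  set Ay : ℂ → W →L[ℝ] W := fun z => Cs1 π₂ + fF G z • Cs2 π₀ + b2 z • Cs2 π₁ + c2 z • Cs2 π₂
      + g2F G z • Cs3 π₀ + b3 z • Cs3 π₁ + c3 z • Cs3 π₂ with hAyd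
  have hAxev : ∀ z (p : W), Ax z p = (p.2.1,
      (eF G z • p.1 + b1 z • p.2.1 + c1 z • p.2.2,
       fF G z • p.1 + b2 z • p.2.1 + c2 z • p.2.2)) := by
    intro z p
    simp [hAxd, Cs1, Cs2, Cs3, π₀, π₁, π₂, πs, ContinuousLinearMap.prod_apply,
      Prod.ext_iff]
  have hAyev : ∀ z (p : W), Ay z p = (p.2.2,
      (fF G z • p.1 + b2 z • p.2.1 + c2 z • p.2.2,
       g2F G z • p.1 + b3 z • p.2.1 + c3 z • p.2.2)) := by
    intro z p
    simp [hAyd, Cs1, Cs2, Cs3, π₀, π₁, π₂, πs, ContinuousLinearMap.prod_apply,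
      Prod.ext_iff]
  -- decompositions with shared coefficients
  have hdecG : ∀ z ∈ closedBall z₀ (2 * ρ),
      Dx (Dx G) z = eF G z • G z + b1 z • Dx G z + c1 z • Dy G z
      ∧ Dy (Dx G) z = fF G z • G z + b2 z • Dx G z + c2 z • Dy G z
      ∧ Dy (Dy G) z = g2F G z • G z + b3 z • Dx G z + c3 z • Dy G z := by
    intro z hz
    have h := decomp hΩ hG hnG (hballΩ z hz) (hballd z hz)
    rw [← hb1d, ← hc1d, ← hb2d, ← hc2d, ← hb3d, ← hc3d] at h
    exact h
  have hdecGt : ∀ z ∈ closedBall z₀ (2 * ρ),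
      Dx (Dx Gt) z = eF G z • Gt z + b1 z • Dx Gt z + c1 z • Dy Gt z
      ∧ Dy (Dx Gt) z = fF G z • Gt z + b2 z • Dx Gt z + c2 z • Dy Gt z
      ∧ Dy (Dy Gt) z = g2F G z • Gt z + b3 z • Dx Gt z + c3 z • Dy Gt z := by
    intro z hz
    have hzΩ := hballΩ z hz
    have h := decomp hΩ hGt hnGt hzΩ (by rw [hdFs z hzΩ]; exact hballd z hz)
    rw [hEs z hzΩ, hFs z hzΩ, hGs z hzΩ,
      (hbc (p1 G) (q1 G) (p1 Gt) (q1 Gt) z hzΩ (hp1 z hzΩ) (hq1 z hzΩ)).1,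
      (hbc (p1 G) (q1 G) (p1 Gt) (q1 Gt) z hzΩ (hp1 z hzΩ) (hq1 z hzΩ)).2,
      (hbc (p2 G) (q2 G) (p2 Gt) (q2 Gt) z hzΩ (hp2 z hzΩ) (hq2 z hzΩ)).1,
      (hbc (p2 G) (q2 G) (p2 Gt) (q2 Gt) z hzΩ (hp2 z hzΩ) (hq2 z hzΩ)).2,
      (hbc (p3 G) (q3 G) (p3 Gt) (q3 Gt) z hzΩ (hp3 z hzΩ) (hq3 z hzΩ)).1,
      (hbc (p3 G) (q3 G) (p3 Gt) (q3 Gt) z hzΩ (hp3 z hzΩ) (hq3 z hzΩ)).2] at h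
    rw [← hb1d, ← hc1d, ← hb2d, ← hc2d, ← hb3d, ← hc3d] at h
    exact h
  -- frame derivative
  have frameGen : ∀ (H : ℂ → Fin 3 → ℝ), AnalyticOnNhd ℝ H Ω →
      ∀ z ∈ closedBall z₀ (2 * ρ),
      (Dx (Dx H) z = eF G z • H z + b1 z • Dx H z + c1 z • Dy H z) →
      (Dy (Dx H) z = fF G z • H z + b2 z • Dx H z + c2 z • Dy H z) →
      (Dy (Dy H) z = g2F G z • H z + b3 z • Dx H z + c3 z • Dy H z) →
      ∃ Φ : ℂ →L[ℝ] W, HasFDerivAt (VH H) Φ z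
        ∧ Φ 1 = Ax z (VH H z) ∧ Φ Complex.I = Ay z (VH H z) := by
    intro H hH z hz d1 d2 d3
    have hzΩ := hballΩ z hz
    have hdH : DifferentiableAt ℝ H z := (hH z hzΩ).differentiableAt
    have hdDx : DifferentiableAt ℝ (Dx H) z :=
      ((analyticOnNhd_fderiv_apply hΩ hH 1) z hzΩ).differentiableAt
    have hdDy : DifferentiableAt ℝ (Dy H) z :=
      ((analyticOnNhd_fderiv_apply hΩ hH Complex.I) z hzΩ).differentiableAt
    refine ⟨(fderiv ℝ H z).prod ((fderiv ℝ (Dx H) z).prod (fderiv ℝ (Dy H) z)),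
      hdH.hasFDerivAt.prodMk (hdDx.hasFDerivAt.prodMk hdDy.hasFDerivAt), ?_, ?_⟩
    · have hsymm : Dx (Dy H) z = Dy (Dx H) z := Dv_comm ((hH z hzΩ).contDiffAt)
      rw [hAxev]
      simp only [ContinuousLinearMap.prod_apply, VH]
      refine Prod.ext rfl (Prod.ext ?_ ?_)
      · exact d1
      · show Dx (Dy H) z = _
        rw [hsymm]; exact d2
    · rw [hAyev]
      simp only [ContinuousLinearMap.prod_apply, VH]
      refine Prod.ext rfl (Prod.ext ?_ ?_)
      · exact d2
      · exact d3
  -- generic uniqueness sweep along a line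
  have sweep : ∀ (Af : ℂ → W →L[ℝ] W) (dir : ℂ),
      ContinuousOn (fun z => Af z) (closedBall z₀ (2 * ρ)) →
      ∀ (p : ℂ), (∀ t ∈ Icc (-ρ) ρ, p + t • dir ∈ closedBall z₀ (2 * ρ)) →
      (∀ z ∈ closedBall z₀ (2 * ρ), ∃ Φ : ℂ →L[ℝ] W,
        HasFDerivAt (VH G) Φ z ∧ Φ dir = Af z (VH G z)) →
      (∀ z ∈ closedBall z₀ (2 * ρ), ∃ Φ : ℂ →L[ℝ] W,
        HasFDerivAt (VH Gt) Φ z ∧ Φ dir = Af z (VH Gt z)) →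
      VH G p = VH Gt p →
      ∀ t ∈ Ioo (-ρ) ρ, VH G (p + t • dir) = VH Gt (p + t • dir) := by
    intro Af dir hcont p hpmem hdG hdGt hp0
    obtain ⟨C, hC⟩ := (isCompact_closedBall z₀ (2 * ρ)).exists_bound_of_continuousOn hcont
    set K : NNReal := ⟨max C 0, le_max_right C 0⟩ with hK
    set clamp : ℝ → ℝ := fun t => max (-ρ) (min ρ t) with hclampd
    have hclampIcc : ∀ t : ℝ, clamp t ∈ Icc (-ρ) ρ := fun t =>
      ⟨le_max_left _ _, max_le (by linarith) (min_le_left _ _)⟩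
    have hclampeq : ∀ t ∈ Ioo (-ρ) ρ, clamp t = t := fun t ht => by
      simp only [hclampd]
      rw [min_eq_right ht.2.le, max_eq_right ht.1.le]
    set v : ℝ → W → W := fun t x => Af (p + clamp t • dir) x with hvd
    have hv : ∀ t, LipschitzOnWith K (v t) Set.univ := by
      intro t
      have hmem := hpmem (clamp t) (hclampIcc t)
      have hb : ‖Af (p + clamp t • dir)‖ ≤ max C 0 :=
        le_trans (hC _ hmem) (le_max_left _ _)
      exact ((Af (p + clamp t • dir)).lipschitz.weaken
        (NNReal.coe_le_coe.mp (by rw [coe_nnnorm]; exact hb))).lipschitzOnWith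
    have hline : ∀ t : ℝ, HasDerivAt (fun t : ℝ => p + t • dir) dir t := by
      intro t
      have h := ((hasDerivAt_id t).smul_const dir).const_add p
      simpa using h
    have hf : ∀ t ∈ Ioo (-ρ) ρ, HasDerivAt (fun t : ℝ => VH G (p + t • dir))
        (v t (VH G (p + t • dir))) t ∧ VH G (p + t • dir) ∈ (fun _ : ℝ => Set.univ) t := by
      intro t ht
      have hmem := hpmem t (Ioo_subset_Icc_self ht)
      obtain ⟨Φ, hΦ, hΦd⟩ := hdG _ hmem
      refine ⟨?_, trivial⟩
      have h := hΦ.comp_hasDerivAt t (hline t)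
      rw [hΦd] at h
      have : v t (VH G (p + t • dir)) = Af (p + t • dir) (VH G (p + t • dir)) := by
        rw [hvd]; simp only []; rw [hclampeq t ht]
      rw [this]
      exact h
    have hg : ∀ t ∈ Ioo (-ρ) ρ, HasDerivAt (fun t : ℝ => VH Gt (p + t • dir))
        (v t (VH Gt (p + t • dir))) t ∧ VH Gt (p + t • dir) ∈ (fun _ : ℝ => Set.univ) t := by
      intro t ht
      have hmem := hpmem t (Ioo_subset_Icc_self ht)
      obtain ⟨Φ, hΦ, hΦd⟩ := hdGt _ hmem
      refine ⟨?_, trivial⟩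
      have h := hΦ.comp_hasDerivAt t (hline t)
      rw [hΦd] at h
      have : v t (VH Gt (p + t • dir)) = Af (p + t • dir) (VH Gt (p + t • dir)) := by
        rw [hvd]; simp only []; rw [hclampeq t ht]
      rw [this]
      exact h
    have heq0 : VH G (p + (0 : ℝ) • dir) = VH Gt (p + (0 : ℝ) • dir) := by
      simpa using hp0
    have h := ODE_solution_unique_of_mem_Ioo (fun t _ => hv t) (t₀ := 0) (by constructor <;> linarith)
      hf hg heq0
    intro t ht
    exact h ht
  -- continuity of the connection fields on the closed ball
  have hcOn : ∀ (φ : ℂ → ℝ), AnalyticOnNhd ℝ φ Ω → ContinuousOn φ (closedBall z₀ (2 * ρ)) :=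
    fun φ hφ z hz => ((hφ z (hballΩ z hz)).continuousAt).continuousWithinAt
  have hctE := hcOn _ heA
  have hctF := hcOn _ hfA
  have hctG2 := hcOn _ hgA
  have hctD := hcOn _ hdA
  have hctDE1 := hcOn _ (analyticOnNhd_fderiv_apply hΩ heA 1)
  have hctDEI := hcOn _ (analyticOnNhd_fderiv_apply hΩ heA Complex.I)
  have hctDF1 := hcOn _ (analyticOnNhd_fderiv_apply hΩ hfA 1)
  have hctDFI := hcOn _ (analyticOnNhd_fderiv_apply hΩ hfA Complex.I)
  have hctDG1 := hcOn _ (analyticOnNhd_fderiv_apply hΩ hgA 1)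
  have hctDGI := hcOn _ (analyticOnNhd_fderiv_apply hΩ hgA Complex.I)
  have hdne : ∀ z ∈ closedBall z₀ (2 * ρ), dF G z ≠ 0 := hballd
  have hctp1 : ContinuousOn (p1 G) (closedBall z₀ (2 * ρ)) := hctDE1.div_const 2
  have hctq1 : ContinuousOn (q1 G) (closedBall z₀ (2 * ρ)) :=
    hctDF1.sub (hctDEI.div_const 2)
  have hctp2 : ContinuousOn (p2 G) (closedBall z₀ (2 * ρ)) := hctDEI.div_const 2
  have hctq2 : ContinuousOn (q2 G) (closedBall z₀ (2 * ρ)) := hctDG1.div_const 2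
  have hctp3 : ContinuousOn (p3 G) (closedBall z₀ (2 * ρ)) :=
    hctDFI.sub (hctDG1.div_const 2)
  have hctq3 : ContinuousOn (q3 G) (closedBall z₀ (2 * ρ)) := hctDGI.div_const 2
  have hctbc : ∀ (p q : ℂ → ℝ), ContinuousOn p (closedBall z₀ (2 * ρ)) →
      ContinuousOn q (closedBall z₀ (2 * ρ)) →
      ContinuousOn (bco G p q) (closedBall z₀ (2 * ρ))
        ∧ ContinuousOn (cco G p q) (closedBall z₀ (2 * ρ)) := by
    intro p q hp hq
    constructor
    · exact ((hctG2.mul hp).sub (hctF.mul hq)).div hctD hdne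
    · exact ((hctE.mul hq).sub (hctF.mul hp)).div hctD hdne
  have hctb1 : ContinuousOn b1 (closedBall z₀ (2 * ρ)) := by
    rw [hb1d]; exact (hctbc _ _ hctp1 hctq1).1
  have hctc1 : ContinuousOn c1 (closedBall z₀ (2 * ρ)) := by
    rw [hc1d]; exact (hctbc _ _ hctp1 hctq1).2
  have hctb2 : ContinuousOn b2 (closedBall z₀ (2 * ρ)) := by
    rw [hb2d]; exact (hctbc _ _ hctp2 hctq2).1
  have hctc2 : ContinuousOn c2 (closedBall z₀ (2 * ρ)) := by
    rw [hc2d]; exact (hctbc _ _ hctp2 hctq2).2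
  have hctb3 : ContinuousOn b3 (closedBall z₀ (2 * ρ)) := by
    rw [hb3d]; exact (hctbc _ _ hctp3 hctq3).1
  have hctc3 : ContinuousOn c3 (closedBall z₀ (2 * ρ)) := by
    rw [hc3d]; exact (hctbc _ _ hctp3 hctq3).2
  have hctAx : ContinuousOn (fun z => Ax z) (closedBall z₀ (2 * ρ)) := by
    rw [hAxd]
    exact ((((((continuousOn_const.add (hctE.smul continuousOn_const)).add
      (hctb1.smul continuousOn_const)).add (hctc1.smul continuousOn_const)).add
      (hctF.smul continuousOn_const)).add (hctb2.smul continuousOn_const)).add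
      (hctc2.smul continuousOn_const))
  have hctAy : ContinuousOn (fun z => Ay z) (closedBall z₀ (2 * ρ)) := by
    rw [hAyd]
    exact ((((((continuousOn_const.add (hctF.smul continuousOn_const)).add
      (hctb2.smul continuousOn_const)).add (hctc2.smul continuousOn_const)).add
      (hctG2.smul continuousOn_const)).add (hctb3.smul continuousOn_const)).add
      (hctc3.smul continuousOn_const))
  -- frame hypotheses for the sweeps
  have hframeG : ∀ z ∈ closedBall z₀ (2 * ρ), ∃ Φ : ℂ →L[ℝ] W, HasFDerivAt (VH G) Φ z
      ∧ Φ 1 = Ax z (VH G z) ∧ Φ Complex.I = Ay z (VH G z) := fun z hz =>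
    frameGen G hG z hz (hdecG z hz).1 (hdecG z hz).2.1 (hdecG z hz).2.2
  have hframeGt : ∀ z ∈ closedBall z₀ (2 * ρ), ∃ Φ : ℂ →L[ℝ] W, HasFDerivAt (VH Gt) Φ z
      ∧ Φ 1 = Ax z (VH Gt z) ∧ Φ Complex.I = Ay z (VH Gt z) := fun z hz =>
    frameGen Gt hGt z hz (hdecGt z hz).1 (hdecGt z hz).2.1 (hdecGt z hz).2.2
  -- vertical sweep
  have hvmem : ∀ t ∈ Icc (-ρ) ρ, z₀ + t • Complex.I ∈ closedBall z₀ (2 * ρ) := by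
    intro t ht
    rw [mem_closedBall, dist_eq_norm, add_sub_cancel_left, norm_smul, Complex.norm_I, mul_one,
      Real.norm_eq_abs]
    have := abs_le.mpr ⟨ht.1, ht.2⟩
    linarith
  have hvert : ∀ y ∈ Ioo (-ρ) ρ, VH G (z₀ + y • Complex.I) = VH Gt (z₀ + y • Complex.I) := by
    have h00 : VH G z₀ = VH Gt z₀ := by
      simp only [VH, h0, hx0, hy0]
    exact sweep Ay Complex.I hctAy z₀ hvmem
      (fun z hz => (hframeG z hz).imp (fun Φ hΦ => ⟨hΦ.1, hΦ.2.2⟩))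
      (fun z hz => (hframeGt z hz).imp (fun Φ hΦ => ⟨hΦ.1, hΦ.2.2⟩)) h00
  -- horizontal sweeps
  have hhor : ∀ y ∈ Ioo (-ρ) ρ, ∀ x ∈ Ioo (-ρ) ρ,
      VH G (z₀ + y • Complex.I + x • (1 : ℂ)) = VH Gt (z₀ + y • Complex.I + x • (1 : ℂ)) := by
    intro y hy
    have hmem : ∀ t ∈ Icc (-ρ) ρ, z₀ + y • Complex.I + t • (1 : ℂ) ∈ closedBall z₀ (2 * ρ) := by
      intro t ht
      rw [mem_closedBall, dist_eq_norm]
      have harr : z₀ + y • Complex.I + t • (1 : ℂ) - z₀ = y • Complex.I + t • (1 : ℂ) := by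
        ring_nf
      rw [harr]
      have h1 : ‖y • Complex.I + t • (1 : ℂ)‖ ≤ ‖y • Complex.I‖ + ‖t • (1 : ℂ)‖ :=
        norm_add_le _ _
      rw [norm_smul, norm_smul, Complex.norm_I, norm_one, mul_one, mul_one,
        Real.norm_eq_abs, Real.norm_eq_abs] at h1
      have hya := abs_le.mpr ⟨hy.1.le, hy.2.le⟩
      have hta := abs_le.mpr ⟨ht.1, ht.2⟩
      linarith
    exact sweep Ax 1 hctAx (z₀ + y • Complex.I) hmem
      (fun z hz => (hframeG z hz).imp (fun Φ hΦ => ⟨hΦ.1, hΦ.2.1⟩))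
      (fun z hz => (hframeGt z hz).imp (fun Φ hΦ => ⟨hΦ.1, hΦ.2.1⟩))
      (hvert y hy)
  -- conclusion : equality on the small ball
  have hEqOn : EqOn G Gt (ball z₀ ρ) := by
    intro w hw
    set x : ℝ := (w - z₀).re with hxd
    set y : ℝ := (w - z₀).im with hyd
    have hwn : ‖w - z₀‖ < ρ := by rwa [mem_ball, dist_eq_norm] at hw
    have hxa : |x| < ρ := lt_of_le_of_lt (Complex.abs_re_le_norm _) hwn
    have hya : |y| < ρ := lt_of_le_of_lt (Complex.abs_im_le_norm _) hwn
    have hxI : x ∈ Ioo (-ρ) ρ := by rw [abs_lt] at hxa; exact ⟨hxa.1, hxa.2⟩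
    have hyI : y ∈ Ioo (-ρ) ρ := by rw [abs_lt] at hya; exact ⟨hya.1, hya.2⟩
    have hwrep : z₀ + y • Complex.I + x • (1 : ℂ) = w := by
      rw [Complex.real_smul, Complex.real_smul]
      apply Complex.ext
      · simp [hxd]
      · simp [hyd]
    have := hhor y hyI x hxI
    rw [hwrep] at this
    exact congrArg Prod.fst this
  exact EqOn.eventuallyEq_of_mem hEqOn (ball_mem_nhds z₀ hρpos)

end S16

/-- Two real-analytic harmonic maps `G, G̃ : Ω → ℍ²` with the same first fundamental form
that agree to first order at a point where `G` is an immersion coincide on connected `Ω`. -/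
theorem stmt16 (Ω : Set ℂ) (hΩ : IsOpen Ω) (hconn : IsConnected Ω)
    (G Gt : ℂ → (Fin 3 → ℝ))
    (hG : AnalyticOnNhd ℝ G Ω) (hGt : AnalyticOnNhd ℝ Gt Ω)
    (hGH2 : ∀ z ∈ Ω, lor3c (cx G z) (cx G z) = -1 ∧ 0 < G z 0)
    (hGtH2 : ∀ z ∈ Ω, lor3c (cx Gt z) (cx Gt z) = -1 ∧ 0 < Gt z 0)
    (hGharm : ∀ z ∈ Ω, ∃ f : ℂ, wzbV (fun w => wzV (cx G) w) z = fun i => f * cx G z i)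
    (hGtharm : ∀ z ∈ Ω, ∃ f : ℂ, wzbV (fun w => wzV (cx Gt) w) z = fun i => f * cx Gt z i)
    (hQ : ∀ z ∈ Ω, lor3c (wzV (cx G) z) (wzV (cx G) z) = lor3c (wzV (cx Gt) z) (wzV (cx Gt) z))
    (hμ : ∀ z ∈ Ω,
      lor3c (wzV (cx G) z) (wzbV (cx G) z) = lor3c (wzV (cx Gt) z) (wzbV (cx Gt) z))
    (z₀ : ℂ) (hz₀ : z₀ ∈ Ω)
    (himm : Function.Injective (fderiv ℝ G z₀))
    (h0 : G z₀ = Gt z₀) (h1 : wzV (cx G) z₀ = wzV (cx Gt) z₀) :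
    Set.EqOn G Gt Ω := by
  classical
  have dG : ∀ w ∈ Ω, DifferentiableAt ℝ G w := fun w hw => (hG w hw).differentiableAt
  have dGt : ∀ w ∈ Ω, DifferentiableAt ℝ Gt w := fun w hw => (hGt w hw).differentiableAt
  have hnG : ∀ w ∈ Ω, S16.lorR (G w) (G w) = -1 := by
    intro w hw
    have h := (hGH2 w hw).1
    rw [S16.lor3c_cx] at h
    exact_mod_cast h
  have hnGt : ∀ w ∈ Ω, S16.lorR (Gt w) (Gt w) = -1 := by
    intro w hw
    have h := (hGtH2 w hw).1
    rw [S16.lor3c_cx] at h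
    exact_mod_cast h
  have hEFG : ∀ w ∈ Ω, S16.eF G w = S16.eF Gt w ∧ S16.fF G w = S16.fF Gt w
      ∧ S16.g2F G w = S16.g2F Gt w := by
    intro w hw
    have hq := hQ w hw
    rw [S16.lor3c_zz (dG w hw), S16.lor3c_zz (dGt w hw)] at hq
    have hm := hμ w hw
    rw [S16.lor3c_zzb (dG w hw), S16.lor3c_zzb (dGt w hw)] at hm
    have hm' : (S16.lorR (fderiv ℝ G w 1) (fderiv ℝ G w 1)
          + S16.lorR (fderiv ℝ G w Complex.I) (fderiv ℝ G w Complex.I)) / 4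
        = (S16.lorR (fderiv ℝ Gt w 1) (fderiv ℝ Gt w 1)
          + S16.lorR (fderiv ℝ Gt w Complex.I) (fderiv ℝ Gt w Complex.I)) / 4 := by
      exact_mod_cast hm
    have hre := congrArg Complex.re hq
    have him := congrArg Complex.im hq
    simp only [Complex.sub_re, Complex.ofReal_re, Complex.mul_re, Complex.I_re,
      Complex.ofReal_im, Complex.I_im, Complex.sub_im, Complex.mul_im, mul_zero, zero_mul,
      sub_zero, zero_sub, mul_one, one_mul, zero_add, add_zero, neg_neg, neg_inj] at hre him
    refine ⟨?_, ?_, ?_⟩ <;>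
      · simp only [S16.eF, S16.fF, S16.g2F, S16.Dx, S16.Dy]
        linarith
  have hx0 : S16.Dx G z₀ = S16.Dx Gt z₀ ∧ S16.Dy G z₀ = S16.Dy Gt z₀ := by
    rw [S16.wzV_eq (dG z₀ hz₀), S16.wzV_eq (dGt z₀ hz₀)] at h1
    constructor <;> funext i <;>
      · have h2 := congrFun h1 i
        have hre := congrArg Complex.re h2
        have him := congrArg Complex.im h2
        simp only [Complex.div_re, Complex.div_im, Complex.sub_re, Complex.sub_im,
          Complex.ofReal_re, Complex.ofReal_im, Complex.mul_re, Complex.mul_im,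
          Complex.I_re, Complex.I_im, mul_zero, zero_mul, sub_zero, zero_sub, mul_one,
          one_mul, zero_add, add_zero, neg_neg, Complex.normSq_ofNat] at hre him
        norm_num at hre him
        simp only [S16.Dx, S16.Dy]
        linarith
  have hind : ∀ a b : ℝ, a • S16.Dx G z₀ + b • S16.Dy G z₀ = 0 → a = 0 ∧ b = 0 := by
    intro a b hab
    have h2 : fderiv ℝ G z₀ (a • (1 : ℂ) + b • Complex.I) = fderiv ℝ G z₀ 0 := by
      rw [map_add, map_smul, map_smul, map_zero]
      exact hab
    have h3 := himm h2
    have h4 : (a : ℂ) + (b : ℂ) * Complex.I = 0 := by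
      rw [Complex.real_smul, Complex.real_smul] at h3
      simpa using h3
    rw [Complex.ext_iff] at h4
    simp at h4
    exact h4
  have hd0 : S16.dF G z₀ ≠ 0 := by
    have hpos := S16.gram_pos (hnG z₀ hz₀) (S16.tangent hΩ hG hnG hz₀ 1)
      (S16.tangent hΩ hG hnG hz₀ Complex.I) hind
    have hpos' : (0 : ℝ) < S16.dF G z₀ := hpos
    exact hpos'.ne'
  have hloc := S16.local_eq hΩ hG hGt hnG hnGt (fun w hw => (hEFG w hw).1)
    (fun w hw => (hEFG w hw).2.1) (fun w hw => (hEFG w hw).2.2) hz₀ hd0 h0 hx0.1 hx0.2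
  exact hG.eqOn_of_preconnected_of_eventuallyEq hGt hconn.isPreconnected hz₀ hloc

end
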